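/- Let A be a unital associative finite-dimensional algebra over a field F of characteristic zero and let R be a Rota–Baxter operator of weight 0 on A. Then the element R(1) is nilpotent, i.e., (R(1))^n = 0 for some natural number n ≥ 1. -/

import Mathlib

open Polynomial

/-- **Lemma 4.** If `R` is a Rota–Baxter operator of weight 0 on a unital associative
finite-dimensional algebra `A` over a field `F` of characteristic zero,
then `R(1)` is nilpotent. -/
theorem rotaBaxter_one_isNilpotent {F A : Type*} [Field F] [CharZero F] [Ring A] [Algebra F A]
    [FiniteDimensional F A]
    (R : A →ₗ[F] A) (hR : ∀ x y : A, R x * R y = R (R x * y + x * R y)) :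
    ∃ n : ℕ, 1 ≤ n ∧ (R 1) ^ n = 0 := by
  rcases subsingleton_or_nontrivial A with hA | hA
  · exact ⟨1, le_refl 1, Subsingleton.elim _ _⟩
  set r := R 1 with hr
  -- Key identity: r^(k+1) = (k+1) • R(r^k)
  have key : ∀ k : ℕ, r ^ (k + 1) = ((k + 1 : ℕ) : F) • R (r ^ k) := by
    intro k
    induction k with
    | zero => simp [hr]
    | succ k ih =>
      have hk : ((k + 1 : ℕ) : F) ≠ 0 := Nat.cast_ne_zero.mpr (Nat.succ_ne_zero k)
      have hRk : R (r ^ k) = ((k + 1 : ℕ) : F)⁻¹ • r ^ (k + 1) := by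
        rw [ih, smul_smul, inv_mul_cancel₀ hk, one_smul]
      calc r ^ (k + 1 + 1) = r * r ^ (k + 1) := (pow_succ' r (k+1))
        _ = ((k+1:ℕ):F) • (R 1 * R (r ^ k)) := by rw [ih, hr, mul_smul_comm]
        _ = ((k+1:ℕ):F) • R (R 1 * r ^ k + 1 * R (r ^ k)) := by rw [hR]
        _ = ((k+1:ℕ):F) • (R (r ^ (k+1)) + R (R (r ^ k))) := by
              rw [map_add, one_mul, ← hr, ← pow_succ']
        _ = ((k+1:ℕ):F) • (R (r ^ (k+1)) + ((k + 1 : ℕ) : F)⁻¹ • R (r ^ (k+1))) := by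
              rw [hRk, map_smul]
        _ = ((k + 1 + 1 : ℕ) : F) • R (r ^ (k+1)) := by
              rw [smul_add, smul_smul, mul_inv_cancel₀ hk, one_smul]
              push_cast
              module
  have hint : IsIntegral F r := IsIntegral.of_finite F r
  set p : F[X] := minpoly F r with hp
  have hmonic : p.Monic := minpoly.monic hint
  set d : ℕ := p.natDegree with hd
  have hd1 : 1 ≤ d := minpoly.natDegree_pos hint
  -- the "antiderivative" of p
  set q : F[X] := ∑ k ∈ Finset.range (d+1), C (p.coeff k * ((k+1:ℕ):F)⁻¹) * X^(k+1) with hq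
  have haevalp : (aeval r) p = 0 := minpoly.aeval F r
  -- q annihilates r
  have haevalq : (aeval r) q = 0 := by
    have : (aeval r) q = ∑ k ∈ Finset.range (d+1),
        (p.coeff k * ((k+1:ℕ):F)⁻¹) • r ^ (k+1) := by
      rw [hq, map_sum]
      refine Finset.sum_congr rfl fun k _ => ?_
      rw [map_mul, aeval_C, map_pow, aeval_X, Algebra.smul_def]
    rw [this]
    have h2 : ∀ k ∈ Finset.range (d+1),
        (p.coeff k * ((k+1:ℕ):F)⁻¹) • r ^ (k+1) = R (p.coeff k • r ^ k) := by
      intro k _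
      have hk : ((k + 1 : ℕ) : F) ≠ 0 := Nat.cast_ne_zero.mpr (Nat.succ_ne_zero k)
      rw [key k, map_smul, smul_smul, mul_assoc, inv_mul_cancel₀ hk, mul_one]
    rw [Finset.sum_congr rfl h2, ← map_sum, ← aeval_eq_sum_range, haevalp, map_zero]
  -- coefficients of q
  have hqc : ∀ j : ℕ, q.coeff (j+1) =
      if j < d + 1 then p.coeff j * ((j+1:ℕ):F)⁻¹ else 0 := by
    intro j
    rw [hq, finset_sum_coeff]
    have : ∀ k ∈ Finset.range (d+1),
        (C (p.coeff k * ((k+1:ℕ):F)⁻¹) * X^(k+1)).coeff (j+1) =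
        if k = j then p.coeff k * ((k+1:ℕ):F)⁻¹ else 0 := by
      intro k _
      rw [coeff_C_mul, coeff_X_pow]
      by_cases h : k = j
      · simp [h]
      · have : ¬ (j + 1 = k + 1) := fun hh => h (Nat.succ_injective hh).symm
        simp [h, this]
        exact fun hh => absurd hh.symm h
    rw [Finset.sum_congr rfl this, Finset.sum_ite_eq' (Finset.range (d+1)) j]
    simp [Finset.mem_range]
  have hqc0 : q.coeff 0 = 0 := by
    rw [hq, finset_sum_coeff]
    refine Finset.sum_eq_zero fun k _ => ?_
    rw [coeff_C_mul, coeff_X_pow]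
    simp
  -- p divides q
  obtain ⟨g, hg⟩ : p ∣ q := minpoly.dvd F r haevalq
  have hp0 : p ≠ 0 := minpoly.ne_zero hint
  have hqtop : q.coeff (d+1) = ((d+1:ℕ):F)⁻¹ := by
    rw [hqc d, if_pos (lt_add_one d), hd, hmonic.coeff_natDegree, one_mul]
  have hq0 : q ≠ 0 := by
    intro h
    have hd1' : ((d+1:ℕ):F) ≠ 0 := Nat.cast_ne_zero.mpr (Nat.succ_ne_zero d)
    rw [h, coeff_zero] at hqtop
    exact hd1' (by rw [← inv_inv ((d+1:ℕ):F), ← hqtop, inv_zero])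
  have hg0 : g ≠ 0 := by rintro rfl; rw [mul_zero] at hg; exact hq0 hg
  have hqe : q.natDegree ≤ d + 1 := by
    rw [hq]
    refine natDegree_sum_le_of_forall_le _ _ fun k hk => ?_
    refine le_trans (natDegree_C_mul_le _ _) ?_
    rw [natDegree_X_pow]
    exact Nat.succ_le_succ (Nat.lt_succ_iff.mp (Finset.mem_range.mp hk))
  have hgdeg : g.natDegree ≤ 1 := by
    have := natDegree_mul hp0 hg0
    rw [← hg] at this
    omega
  set c : F := g.coeff 1 with hc
  set e : F := g.coeff 0 with he
  have hgX : g = C c * X + C e := eq_X_add_C_of_natDegree_le_one hgdeg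
  -- coefficient equations
  have E : ∀ j : ℕ, q.coeff (j+1) = p.coeff j * c + p.coeff (j+1) * e := by
    intro j
    rw [hg, hgX, mul_add, coeff_add, ← mul_assoc, coeff_mul_X, coeff_mul_C, coeff_mul_C]
  have E0 : p.coeff 0 * e = 0 := by
    have := mul_coeff_zero p g
    rw [← hg, hqc0, ← he] at this
    exact this.symm
  -- c = (d+1)⁻¹
  have hcval : c = ((d+1:ℕ):F)⁻¹ := by
    have h := E d
    rw [hqtop, hd, hmonic.coeff_natDegree, one_mul,
      coeff_eq_zero_of_natDegree_lt (lt_add_one _), zero_mul, add_zero] at h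
    exact h.symm
  -- δ_j ≠ 0
  have hdelta : ∀ j : ℕ, j < d → ((j+1:ℕ):F)⁻¹ - ((d+1:ℕ):F)⁻¹ ≠ 0 := by
    intro j hj h
    have h1 : ((j+1:ℕ):F)⁻¹ = ((d+1:ℕ):F)⁻¹ := sub_eq_zero.mp h
    have h2 : ((j+1:ℕ):F) = ((d+1:ℕ):F) := inv_injective h1
    have := Nat.cast_injective (R := F) h2
    omega
  -- the main equations: a_j * δ_j = a_{j+1} * e
  have E' : ∀ j : ℕ, j < d →
      p.coeff j * (((j+1:ℕ):F)⁻¹ - ((d+1:ℕ):F)⁻¹) = p.coeff (j+1) * e := by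
    intro j hj
    have := E j
    rw [hqc j, if_pos (by omega), hcval] at this
    linear_combination this
  -- all lower coefficients vanish
  have hvanish : ∀ j : ℕ, j < d → p.coeff j = 0 := by
    by_cases hee : e = 0
    · intro j hj
      have h := E' j hj
      rw [hee, mul_zero] at h
      exact (mul_eq_zero.mp h).resolve_right (hdelta j hj)
    · have h0 : p.coeff 0 = 0 := (mul_eq_zero.mp E0).resolve_right hee
      intro j
      induction j with
      | zero => intro _; exact h0
      | succ j ih =>
        intro hj
        have hj' : j < d := by omega
        have h := E' j hj'
        rw [ih hj', zero_mul] at h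
        exact (mul_eq_zero.mp h.symm).resolve_right hee
  -- conclude r^d = 0
  refine ⟨d, hd1, ?_⟩
  have := haevalp
  rw [aeval_eq_sum_range, ← hd, Finset.sum_range_succ] at this
  rw [Finset.sum_eq_zero (fun i hi => by
      rw [hvanish i (Finset.mem_range.mp hi), zero_smul]), zero_add,
    hmonic.coeff_natDegree, one_smul] at this
  exact this
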